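/- Let n ≥ 2, p > 2, and let ψ, σ : (0,∞) → (0,∞) be C¹ positive functions such that ψ'(r)/ψ(r) ≥ σ'(r)/σ(r) for all r > 0 and ψ(s)/σ(s) → 1 as s → 0. Then for every r > 0: (∫₀^r ψ^{n-1} ds)^{1/p} · (∫_r^∞ ψ^{-(n-1)} ds)^{1/2} ≤ (∫₀^r σ^{n-1} ds)^{1/p} · (∫_r^∞ σ^{-(n-1)} ds)^{1/2}, where both sides may be +∞. -/

import Mathlib

open Set Filter MeasureTheory ENNReal

/-- Inequality (3.1): comparison of Muckenhoupt-type quantities. If `ψ'/ψ ≥ σ'/σ` on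
`(0,∞)` and `ψ(s)/σ(s) → 1` as `s → 0⁺`, then for every `r > 0` and `p > 2`,
`(∫₀^r ψ^{n-1})^{1/p} (∫_r^∞ ψ^{-(n-1)})^{1/2} ≤ (∫₀^r σ^{n-1})^{1/p} (∫_r^∞ σ^{-(n-1)})^{1/2}`
(in the extended nonnegative reals, so both sides may be `∞`). -/
theorem muckenhoupt_comparison (n : ℕ) (hn : 2 ≤ n) (p : ℝ) (hp : 2 < p)
    (ψ σ : ℝ → ℝ)
    (hψpos : ∀ r > (0:ℝ), 0 < ψ r) (hσpos : ∀ r > (0:ℝ), 0 < σ r)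
    (hψdiff : ∀ r > (0:ℝ), DifferentiableAt ℝ ψ r)
    (hσdiff : ∀ r > (0:ℝ), DifferentiableAt ℝ σ r)
    (hlog : ∀ r > (0:ℝ), deriv σ r / σ r ≤ deriv ψ r / ψ r)
    (hlim : Tendsto (fun s => ψ s / σ s) (nhdsWithin 0 (Ioi 0)) (nhds 1)) :
    ∀ r > (0:ℝ),
      (∫⁻ s in Ioc (0:ℝ) r, ENNReal.ofReal (ψ s ^ (n - 1))) ^ (1 / p)
          * (∫⁻ s in Ioi r, ENNReal.ofReal ((ψ s ^ (n - 1))⁻¹)) ^ (1 / 2 : ℝ)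
        ≤ (∫⁻ s in Ioc (0:ℝ) r, ENNReal.ofReal (σ s ^ (n - 1))) ^ (1 / p)
          * (∫⁻ s in Ioi r, ENNReal.ofReal ((σ s ^ (n - 1))⁻¹)) ^ (1 / 2 : ℝ) := by
  -- Monotonicity of ψ/σ on (0,∞)
  have hfmono : MonotoneOn (fun x => ψ x / σ x) (Ioi (0:ℝ)) := by
    apply monotoneOn_of_deriv_nonneg (convex_Ioi 0)
    · exact fun x hx =>
        (((hψdiff x hx).div (hσdiff x hx) (hσpos x hx).ne')).continuousAt.continuousWithinAt
    · rw [interior_Ioi]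
      exact fun x hx =>
        (((hψdiff x hx).div (hσdiff x hx) (hσpos x hx).ne')).differentiableWithinAt
    · rw [interior_Ioi]
      intro x hx
      rw [show (fun x => ψ x / σ x) = ψ / σ from rfl, deriv_div (hψdiff x hx) (hσdiff x hx) (hσpos x hx).ne']
      apply div_nonneg _ (sq_nonneg _)
      have h := hlog x hx
      rw [div_le_div_iff₀ (hσpos x hx) (hψpos x hx)] at h
      linarith
  -- ψ/σ ≥ 1 on (0,∞)
  have hone : ∀ s > (0:ℝ), 1 ≤ ψ s / σ s := by
    intro s hs
    refine le_of_tendsto hlim ?_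
    filter_upwards [Ioo_mem_nhdsGT_of_mem ⟨le_refl (0:ℝ), hs⟩] with t ht
    exact hfmono ht.1 hs ht.2.le
  -- cross product inequality
  have hcross : ∀ s t : ℝ, 0 < s → s ≤ t → ψ s * σ t ≤ σ s * ψ t := by
    intro s t hs hst
    have ht : (0:ℝ) < t := lt_of_lt_of_le hs hst
    have h := hfmono (mem_Ioi.2 hs) (mem_Ioi.2 ht) hst
    rw [div_le_div_iff₀ (hσpos s hs) (hσpos t ht)] at h
    linarith
  intro r hr
  set m := n - 1 with hm
  set a := ENNReal.ofReal (ψ r ^ m) with ha_def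
  set b := ENNReal.ofReal (σ r ^ m) with hb_def
  have ha0 : a ≠ 0 := by
    simp only [ha_def, ne_eq, ENNReal.ofReal_eq_zero, not_le]
    exact pow_pos (hψpos r hr) m
  have hb0 : b ≠ 0 := by
    simp only [hb_def, ne_eq, ENNReal.ofReal_eq_zero, not_le]
    exact pow_pos (hσpos r hr) m
  have haT : a ≠ ⊤ := ENNReal.ofReal_ne_top
  have hbT : b ≠ ⊤ := ENNReal.ofReal_ne_top
  set Aψ := ∫⁻ s in Ioc (0:ℝ) r, ENNReal.ofReal (ψ s ^ m) with hAψ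
  set Aσ := ∫⁻ s in Ioc (0:ℝ) r, ENNReal.ofReal (σ s ^ m) with hAσ
  set Bψ := ∫⁻ s in Ioi r, ENNReal.ofReal ((ψ s ^ m)⁻¹) with hBψ
  set Bσ := ∫⁻ s in Ioi r, ENNReal.ofReal ((σ s ^ m)⁻¹) with hBσ
  -- first integral inequality
  have hA : b * Aψ ≤ a * Aσ := by
    rw [hAψ, hAσ, ← lintegral_const_mul' b _ hbT, ← lintegral_const_mul' a _ haT]
    refine lintegral_mono_ae ((ae_restrict_iff' measurableSet_Ioc).2 (ae_of_all _ ?_))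
    intro s hs
    have hs0 : (0:ℝ) < s := hs.1
    have h1 : ψ s * σ r ≤ σ s * ψ r := hcross s r hs0 hs.2
    have h2 : (ψ s * σ r) ^ m ≤ (σ s * ψ r) ^ m :=
      pow_le_pow_left₀ (mul_nonneg (hψpos s hs0).le (hσpos r hr).le) h1 m
    rw [mul_pow, mul_pow] at h2
    rw [hb_def, ha_def, ← ENNReal.ofReal_mul (pow_pos (hσpos r hr) m).le,
      ← ENNReal.ofReal_mul (pow_pos (hψpos r hr) m).le]
    exact ENNReal.ofReal_le_ofReal (by linarith [h2])
  -- second integral inequality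
  have hB : a * Bψ ≤ b * Bσ := by
    rw [hBψ, hBσ, ← lintegral_const_mul' a _ haT, ← lintegral_const_mul' b _ hbT]
    refine lintegral_mono_ae ((ae_restrict_iff' measurableSet_Ioi).2 (ae_of_all _ ?_))
    intro s hs
    have hs0 : (0:ℝ) < s := lt_trans hr hs
    have h1 : ψ r * σ s ≤ σ r * ψ s := hcross r s hr (mem_Ioi.1 hs).le
    have hψs : (0:ℝ) < ψ s ^ m := pow_pos (hψpos s hs0) m
    have hσs : (0:ℝ) < σ s ^ m := pow_pos (hσpos s hs0) m
    have h2 : ψ r ^ m * (ψ s ^ m)⁻¹ ≤ σ r ^ m * (σ s ^ m)⁻¹ := by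
      rw [← div_eq_mul_inv, ← div_eq_mul_inv, div_le_div_iff₀ hψs hσs, ← mul_pow, ← mul_pow]
      exact pow_le_pow_left₀ (mul_nonneg (hψpos r hr).le (hσpos s hs0).le) (by linarith) m
    rw [ha_def, hb_def, ← ENNReal.ofReal_mul (pow_pos (hψpos r hr) m).le,
      ← ENNReal.ofReal_mul (pow_pos (hσpos r hr) m).le]
    exact ENNReal.ofReal_le_ofReal h2
  -- set c := a / b
  set c := a * b⁻¹ with hc_def
  have hbinvT : b⁻¹ ≠ ⊤ := by simp [hb0]
  have hc0 : c ≠ 0 := by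
    simp only [hc_def, ne_eq, mul_eq_zero, not_or]
    exact ⟨ha0, by simp [hbT]⟩
  have hcT : c ≠ ⊤ := ENNReal.mul_ne_top haT hbinvT
  have hba : b ≤ a := by
    have h1 : σ r ≤ ψ r := (one_le_div (hσpos r hr)).1 (hone r hr)
    exact ENNReal.ofReal_le_ofReal (pow_le_pow_left₀ (hσpos r hr).le h1 m)
  have hc1 : 1 ≤ c := by
    show (1:ℝ≥0∞) ≤ a * b⁻¹
    rw [← div_eq_mul_inv]
    exact (ENNReal.le_div_iff_mul_le (Or.inl hb0) (Or.inl hbT)).2 (by simpa using hba)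
  have hAc : Aψ ≤ Aσ * c := by
    have : b * Aψ * b⁻¹ ≤ a * Aσ * b⁻¹ := mul_le_mul_left hA b⁻¹
    calc Aψ = b * Aψ * b⁻¹ := by
              rw [mul_comm b Aψ, mul_assoc, ENNReal.mul_inv_cancel hb0 hbT, mul_one]
      _ ≤ a * Aσ * b⁻¹ := this
      _ = Aσ * c := by rw [hc_def]; ring
  have hBc : Bψ ≤ Bσ * c⁻¹ := by
    have h : a * Bψ * a⁻¹ ≤ b * Bσ * a⁻¹ := mul_le_mul_left hB a⁻¹
    have hcinv : c⁻¹ = b * a⁻¹ := by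
      rw [hc_def, ENNReal.mul_inv (Or.inl ha0) (Or.inl haT), inv_inv, mul_comm]
    calc Bψ = a * Bψ * a⁻¹ := by
              rw [mul_comm a Bψ, mul_assoc, ENNReal.mul_inv_cancel ha0 haT, mul_one]
      _ ≤ b * Bσ * a⁻¹ := h
      _ = Bσ * c⁻¹ := by rw [hcinv]; ring
  -- finish
  have hp0 : (0:ℝ) ≤ 1 / p := by positivity
  have h2 : (0:ℝ) ≤ 1 / 2 := by norm_num
  calc Aψ ^ (1/p) * Bψ ^ (1/2 : ℝ)
      ≤ (Aσ * c) ^ (1/p) * (Bσ * c⁻¹) ^ (1/2 : ℝ) :=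
        mul_le_mul' (ENNReal.rpow_le_rpow hAc hp0) (ENNReal.rpow_le_rpow hBc h2)
    _ = Aσ ^ (1/p) * Bσ ^ (1/2 : ℝ) * (c ^ (1/p) * (c⁻¹) ^ (1/2 : ℝ)) := by
        rw [ENNReal.mul_rpow_of_nonneg _ _ hp0, ENNReal.mul_rpow_of_nonneg _ _ h2]; ring
    _ ≤ Aσ ^ (1/p) * Bσ ^ (1/2 : ℝ) * 1 := by
        refine mul_le_mul_right ?_ _
        rw [ENNReal.inv_rpow, ← ENNReal.rpow_neg, ← ENNReal.rpow_add _ _ hc0 hcT]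
        calc c ^ (1/p + -(1/2)) ≤ c ^ (0:ℝ) := by
              apply ENNReal.rpow_le_rpow_of_exponent_le hc1
              have : 1/p < 1/2 := by
                apply one_div_lt_one_div_of_lt <;> linarith
              linarith
          _ = 1 := ENNReal.rpow_zero
    _ = Aσ ^ (1/p) * Bσ ^ (1/2 : ℝ) := mul_one _
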